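/- Let x ∈ (0,π], let k ∈ L^∞([0,π]²;ℝ), and suppose Id − κ_x is invertible on L²([0,x]) with ‖(Id−κ_x)^{−1}‖_{L²→L²} ≤ C. Then for every f ∈ L^∞([0,x]), the unique L²-solution u of u − κ_x u = f belongs to L^∞([0,x]) and satisfies ‖u‖_{L^∞([0,x])} ≤ ( π^{1/2} + π‖k‖_{L^∞} C ) · ‖f‖_{L^∞([0,x])}. In particular, ‖(Id−κ_x)^{−1}‖_{L^∞([0,x])→L^∞([0,x])} ≤ π^{1/2} + π‖k‖_{L^∞} C. -/

import Mathlib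

open MeasureTheory
open scoped ENNReal

/-- `L^∞` bound for solutions of the Fredholm equation: if `|k| ≤ Ck`,
`Id − κ_x` is invertible on `L²([0,x])` with `‖(Id−κ_x)⁻¹‖_{L²→L²} ≤ C`, and
`u − κ_x u = f` with `f ∈ L^∞([0,x])`, then `u ∈ L^∞([0,x])` and
`‖u‖_∞ ≤ (π^{1/2} + π‖k‖_∞ C)‖f‖_∞`. -/
theorem stmt18 (x : ℝ) (hx : x ∈ Set.Ioc (0 : ℝ) Real.pi)
    (k : ℝ → ℝ → ℝ) (hkmeas : Measurable (Function.uncurry k))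
    (Ck : ℝ) (hCk : 0 ≤ Ck) (hkbdd : ∀ t s : ℝ, |k t s| ≤ Ck)
    (C : ℝ) (hC : 0 ≤ C)
    -- `Id − κ_x` is invertible on `L²([0,x])` ...
    (hsolve : ∀ h : ℝ → ℝ, MemLp h 2 (volume.restrict (Set.Icc (0 : ℝ) x)) →
      ∃ v : ℝ → ℝ, MemLp v 2 (volume.restrict (Set.Icc (0 : ℝ) x)) ∧
        ∀ᵐ t ∂(volume.restrict (Set.Icc (0 : ℝ) x)),
          v t - ∫ s in Set.Icc (0 : ℝ) x, k t s * v s = h t)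
    -- ... with `‖(Id−κ_x)⁻¹‖_{L²→L²} ≤ C`:
    (hbound : ∀ v : ℝ → ℝ, MemLp v 2 (volume.restrict (Set.Icc (0 : ℝ) x)) →
      eLpNorm v 2 (volume.restrict (Set.Icc (0 : ℝ) x)) ≤
        ENNReal.ofReal C *
          eLpNorm (fun t => v t - ∫ s in Set.Icc (0 : ℝ) x, k t s * v s) 2
            (volume.restrict (Set.Icc (0 : ℝ) x)))
    (f u : ℝ → ℝ)
    (hf : MemLp f ⊤ (volume.restrict (Set.Icc (0 : ℝ) x)))
    (hu : MemLp u 2 (volume.restrict (Set.Icc (0 : ℝ) x)))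
    (heq : ∀ᵐ t ∂(volume.restrict (Set.Icc (0 : ℝ) x)),
      u t - ∫ s in Set.Icc (0 : ℝ) x, k t s * u s = f t) :
    MemLp u ⊤ (volume.restrict (Set.Icc (0 : ℝ) x)) ∧
      eLpNorm u ⊤ (volume.restrict (Set.Icc (0 : ℝ) x)) ≤
        ENNReal.ofReal (Real.sqrt Real.pi + Real.pi * Ck * C) *
          eLpNorm f ⊤ (volume.restrict (Set.Icc (0 : ℝ) x)) := by
  obtain ⟨hx0, hxpi⟩ := hx
  set μ := volume.restrict (Set.Icc (0 : ℝ) x) with hμ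
  have hμuniv : μ Set.univ = ENNReal.ofReal x := by
    simp [hμ, Real.volume_Icc]
  haveI : IsFiniteMeasure μ := ⟨by rw [hμuniv]; exact ENNReal.ofReal_lt_top⟩
  set E := eLpNorm f ⊤ μ with hE
  -- integrability of u
  have huint : Integrable u μ := hu.integrable (by norm_num)
  set I := ∫ s in Set.Icc (0 : ℝ) x, |u s| with hI
  have hI0 : 0 ≤ I := integral_nonneg fun s => abs_nonneg _
  -- pointwise bound on the integral term
  have hpt : ∀ t : ℝ, |∫ s in Set.Icc (0 : ℝ) x, k t s * u s| ≤ Ck * I := by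
    intro t
    have hkm : Measurable fun s => k t s := hkmeas.comp measurable_prodMk_left
    have hint1 : Integrable (fun s => k t s * u s) μ :=
      huint.bdd_mul (c := Ck) hkm.aestronglyMeasurable (Filter.Eventually.of_forall fun s => by
        simpa using hkbdd t s)
    calc |∫ s in Set.Icc (0 : ℝ) x, k t s * u s|
        ≤ ∫ s in Set.Icc (0 : ℝ) x, |k t s| * |u s| := by
          simpa [Real.norm_eq_abs, abs_mul] using
            norm_integral_le_integral_norm (μ := μ) (fun s => k t s * u s)
      _ ≤ ∫ s in Set.Icc (0 : ℝ) x, Ck * |u s| := by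
          refine integral_mono (by simpa [abs_mul] using hint1.abs)
            (huint.abs.const_mul Ck) fun s => ?_
          exact mul_le_mul_of_nonneg_right (hkbdd t s) (abs_nonneg _)
      _ = Ck * I := by rw [hI, integral_const_mul]
  -- a.e. enorm bound on u
  have haebdd : ∀ᵐ t ∂μ, (‖u t‖₊ : ℝ≥0∞) ≤ E + ENNReal.ofReal (Ck * I) := by
    filter_upwards [heq, ae_le_eLpNormEssSup (f := f) (μ := μ)] with t ht hft
    have hut : u t = f t + ∫ s in Set.Icc (0 : ℝ) x, k t s * u s := by
      linarith [ht]
    calc (‖u t‖₊ : ℝ≥0∞)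
        ≤ (‖f t‖₊ : ℝ≥0∞) + (‖∫ s in Set.Icc (0 : ℝ) x, k t s * u s‖₊ : ℝ≥0∞) := by
          rw [hut]
          exact_mod_cast ENNReal.coe_le_coe.2 (nnnorm_add_le _ _)
      _ ≤ E + ENNReal.ofReal (Ck * I) := by
          refine add_le_add ?_ ?_
          · rw [hE, eLpNorm_exponent_top]
            exact hft
          · rw [← enorm_eq_nnnorm, Real.enorm_eq_ofReal_abs]
            exact ENNReal.ofReal_le_ofReal (hpt t)
  have hesssup : eLpNorm u ⊤ μ ≤ E + ENNReal.ofReal (Ck * I) := by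
    rw [eLpNorm_exponent_top, eLpNormEssSup]
    exact essSup_le_of_ae_le _ haebdd
  have hEtop : E < ⊤ := hf.2
  constructor
  · exact ⟨hu.1, lt_of_le_of_lt hesssup
      (ENNReal.add_lt_top.2 ⟨hEtop, ENNReal.ofReal_lt_top⟩)⟩
  -- chain of L² bounds
  set sx := ENNReal.ofReal (Real.sqrt x) with hsx
  have hsqx : (ENNReal.ofReal x) ^ ((1:ℝ)/2) = sx := by
    rw [ENNReal.ofReal_rpow_of_nonneg hx0.le (by norm_num)]
    congr 1
    exact (Real.sqrt_eq_rpow x).symm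
  have h3 : eLpNorm f 2 μ ≤ E * sx := by
    have h := eLpNorm_le_eLpNorm_mul_rpow_measure_univ (p := 2) (q := ⊤)
      le_top hf.1 (μ := μ)
    have hexp : (1 / (2:ℝ≥0∞).toReal - 1 / (⊤:ℝ≥0∞).toReal) = (1:ℝ)/2 := by
      norm_num
    rw [hμuniv, hexp, hsqx] at h
    exact h
  have h2 : eLpNorm u 2 μ ≤ ENNReal.ofReal C * eLpNorm f 2 μ := by
    have hb := hbound u hu
    rwa [eLpNorm_congr_ae heq] at hb
  have h1 : ENNReal.ofReal I ≤ eLpNorm u 2 μ * sx := by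
    have hIeq : ENNReal.ofReal I = eLpNorm u 1 μ := by
      rw [eLpNorm_one_eq_lintegral_enorm,
        ← ofReal_integral_norm_eq_lintegral_enorm huint]
      simp [hI, Real.norm_eq_abs, hμ]
    have h := eLpNorm_le_eLpNorm_mul_rpow_measure_univ (p := 1) (q := 2)
      (by norm_num) hu.1 (μ := μ)
    have hexp : (1 / (1:ℝ≥0∞).toReal - 1 / (2:ℝ≥0∞).toReal) = (1:ℝ)/2 := by
      norm_num
    rw [hμuniv, hexp, hsqx] at h
    rw [hIeq]
    exact h
  have hkey : ENNReal.ofReal (Ck * I) ≤ ENNReal.ofReal (Real.pi * Ck * C) * E := by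
    calc ENNReal.ofReal (Ck * I) = ENNReal.ofReal Ck * ENNReal.ofReal I :=
          ENNReal.ofReal_mul hCk
      _ ≤ ENNReal.ofReal Ck * ((ENNReal.ofReal C * (E * sx)) * sx) := by
          refine mul_le_mul_right (h1.trans ?_) _
          exact mul_le_mul_left (h2.trans (mul_le_mul_right h3 _)) _
      _ = (ENNReal.ofReal Ck * ENNReal.ofReal C * (sx * sx)) * E := by ring
      _ = ENNReal.ofReal (Ck * C * x) * E := by
          rw [hsx, ← ENNReal.ofReal_mul (Real.sqrt_nonneg x),
            Real.mul_self_sqrt hx0.le, ← ENNReal.ofReal_mul hCk,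
            ← ENNReal.ofReal_mul (by positivity)]
      _ ≤ ENNReal.ofReal (Real.pi * Ck * C) * E := by
          refine mul_le_mul_left (ENNReal.ofReal_le_ofReal ?_) _
          nlinarith [mul_nonneg hCk hC]
  have hpi1 : (1:ℝ) ≤ Real.sqrt Real.pi := by
    rw [show (1:ℝ) = Real.sqrt 1 by simp]
    exact Real.sqrt_le_sqrt (by linarith [Real.pi_gt_three])
  calc eLpNorm u ⊤ μ ≤ E + ENNReal.ofReal (Ck * I) := hesssup
    _ ≤ ENNReal.ofReal (Real.sqrt Real.pi) * E
        + ENNReal.ofReal (Real.pi * Ck * C) * E := by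
        refine add_le_add ?_ hkey
        exact le_mul_of_one_le_left zero_le (ENNReal.one_le_ofReal.2 hpi1)
    _ = ENNReal.ofReal (Real.sqrt Real.pi + Real.pi * Ck * C) * E := by
        rw [ENNReal.ofReal_add (Real.sqrt_nonneg _) (by positivity), add_mul]
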